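/- Let G be a topological group. For each positive integer n, let t_n denote the number of continuous homomorphisms from G to the symmetric group S_n (with the discrete topology), set t_0 = 1, and let M_n denote the number of open subgroups of G of index n; assume all these sets are finite. Define (b_n)_{n ≥ 0} by b_0 = 1 and b_{n+1} = Σ_{k=0}^{n} C(n, k) · b_{n−k} · (k! · M_{k+1}). Then t_n = b_n for every nonnegative integer n; that is, t_n equals the complete Bell polynomial B_n evaluated at (0!·M_1, 1!·M_2, …, (n−1)!·M_n). -/

import Mathlib

/-- The number of continuous homomorphisms `G → S_n`, where the symmetric group `S_n`
carries the discrete topology. -/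
noncomputable def contHomCount (G : Type*) [Group G] [TopologicalSpace G] (n : ℕ) : ℕ :=
  Nat.card {φ : G →* Equiv.Perm (Fin n) // @Continuous G (Equiv.Perm (Fin n)) _ ⊥ ⇑φ}

/-- The number of open subgroups of `G` of index `n`. -/
noncomputable def openSubgroupCount (G : Type*) [Group G] [TopologicalSpace G] (n : ℕ) : ℕ :=
  Nat.card {H : Subgroup G // IsOpen (H : Set G) ∧ H.index = n}

set_option linter.unusedSectionVars false


open Equiv Function

namespace BellAux

variable {G : Type*} [Group G] [TopologicalSpace G]

/-- `Perm` congruence as a `MulEquiv`. -/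
def permCongrHom {α β : Type*} (e : α ≃ β) : Equiv.Perm α ≃* Equiv.Perm β where
  toEquiv := e.permCongr
  map_mul' p q := by
    ext x
    simp [Equiv.permCongr_apply, Equiv.Perm.mul_apply]

lemma nat_card_sigma {ι : Type*} [Fintype ι] (f : ι → Type*) [∀ i, Finite (f i)] :
    Nat.card (Σ i, f i) = ∑ i, Nat.card (f i) := by
  letI := fun i => Fintype.ofFinite (f i)
  simp [Nat.card_eq_fintype_card]

lemma card_fix_zero (k : ℕ) :
    Nat.card {π : Equiv.Perm (Fin (k+1)) // π 0 = 0} = k.factorial := by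
  have E : {π : Equiv.Perm (Fin (k+1)) // π 0 = 0} ≃ Equiv.Perm (Fin k) :=
  { toFun := fun π => (Equiv.Perm.decomposeFin π.1).2
    invFun := fun e => ⟨Equiv.Perm.decomposeFin.symm (0, e),
      Equiv.Perm.decomposeFin_symm_apply_zero _ _⟩
    left_inv := fun π => by
      obtain ⟨π, h⟩ := π
      ext1
      dsimp only
      rcases hp : Equiv.Perm.decomposeFin π with ⟨p, f⟩
      have hπ : π = Equiv.Perm.decomposeFin.symm (p, f) := by
        rw [← hp, Equiv.symm_apply_apply]
      have hp0 : p = 0 := by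
        rw [hπ, Equiv.Perm.decomposeFin_symm_apply_zero] at h
        exact h
      subst hp0
      exact hπ.symm
    right_inv := fun e => by simp }
  rw [Nat.card_congr E, Nat.card_eq_fintype_card, Fintype.card_perm, Fintype.card_fin]

lemma card_pointed_equiv {α : Type*} [Finite α] {k : ℕ} (h : Nat.card α = k + 1) (a : α) :
    Nat.card {e : α ≃ Fin (k+1) // e a = 0} = k.factorial := by
  classical
  have f : α ≃ Fin (k + 1) := Finite.equivFinOfCardEq h
  set f' := f.trans (Equiv.swap (f a) 0) with hf'
  have hfa : f' a = 0 := by simp [hf']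
  have hfs : f'.symm 0 = a := by rw [Equiv.symm_apply_eq, hfa]
  have E : {e : α ≃ Fin (k+1) // e a = 0} ≃ {π : Equiv.Perm (Fin (k+1)) // π 0 = 0} :=
  { toFun := fun e => ⟨f'.symm.trans e.1, by simp [hfs, e.2]⟩
    invFun := fun π => ⟨f'.trans π.1, by simp [hfa, π.2]⟩
    left_inv := fun e => by
      ext1; ext x; simp
    right_inv := fun π => by
      ext1; ext x; simp }
  rw [Nat.card_congr E, card_fix_zero]

/-- Continuous homomorphisms to the permutation group of `X` (discrete). -/
abbrev T (G : Type*) [Group G] [TopologicalSpace G] (m : ℕ) : Type _ :=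
  {φ : G →* Equiv.Perm (Fin m) // @Continuous G (Equiv.Perm (Fin m)) _ ⊥ ⇑φ}

/-- Pointed transitive continuous homomorphisms. -/
abbrev PT (G : Type*) [Group G] [TopologicalSpace G] (k : ℕ) : Type _ :=
  {φ : G →* Equiv.Perm (Fin (k+1)) //
    (@Continuous G (Equiv.Perm (Fin (k+1))) _ ⊥ ⇑φ) ∧ ∀ x, ∃ g, φ g 0 = x}

instance finitePT (k : ℕ) [Finite (T G (k+1))] : Finite (PT G k) := by
  refine Finite.of_injective (fun x => (⟨x.1, x.2.1⟩ : T G (k+1))) ?_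
  rintro ⟨φ, h⟩ ⟨ψ, h'⟩ hh
  simpa [T, Subtype.ext_iff] using hh

def ofSubgroup (H : Subgroup G) {k : ℕ} (e : G ⧸ H ≃ Fin (k + 1)) :
    G →* Equiv.Perm (Fin (k + 1)) :=
  (permCongrHom e).toMonoidHom.comp (MulAction.toPermHom G (G ⧸ H))

lemma ofSubgroup_apply (H : Subgroup G) {k : ℕ} (e : G ⧸ H ≃ Fin (k+1)) (g : G)
    (x : Fin (k+1)) : ofSubgroup H e g x = e (g • e.symm x) := rfl

lemma isOpen_smul_eq [IsTopologicalGroup G] (H : Subgroup G) (hH : IsOpen (H : Set G))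
    (q q' : G ⧸ H) : IsOpen {g : G | g • q = q'} := by
  obtain ⟨a, rfl⟩ := QuotientGroup.mk_surjective q
  obtain ⟨b, rfl⟩ := QuotientGroup.mk_surjective q'
  have hset : {g : G | g • (QuotientGroup.mk a : G ⧸ H) = QuotientGroup.mk b}
      = (fun g : G => (g * a)⁻¹ * b) ⁻¹' (H : Set G) := by
    ext g
    simp only [Set.mem_setOf_eq, Set.mem_preimage, SetLike.mem_coe]
    rw [MulAction.Quotient.smul_mk, smul_eq_mul, QuotientGroup.eq]
  rw [hset]
  exact hH.preimage (by continuity)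

lemma continuous_ofSubgroup [IsTopologicalGroup G] (H : Subgroup G)
    (hH : IsOpen (H : Set G)) {k : ℕ} [Finite (G ⧸ H)] (e : G ⧸ H ≃ Fin (k+1)) :
    @Continuous G (Equiv.Perm (Fin (k+1))) _ ⊥ ⇑(ofSubgroup H e) := by
  letI : TopologicalSpace (Equiv.Perm (Fin (k+1))) := ⊥
  haveI := discreteTopology_bot (Equiv.Perm (Fin (k+1)))
  rw [continuous_discrete_rng]
  intro σ
  have hset : (⇑(ofSubgroup H e)) ⁻¹' {σ}
      = ⋂ q : G ⧸ H, {g : G | g • q = e.symm (σ (e q))} := by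
    ext g
    simp only [Set.mem_preimage, Set.mem_singleton_iff, Set.mem_iInter, Set.mem_setOf_eq]
    constructor
    · rintro rfl q
      simp [ofSubgroup_apply]
    · intro h
      ext x
      rw [ofSubgroup_apply, h (e.symm x)]
      simp
  rw [hset]
  exact isOpen_iInter_of_finite fun q => isOpen_smul_eq H hH q _

lemma trans_ofSubgroup (H : Subgroup G) {k : ℕ} (e : G ⧸ H ≃ Fin (k+1))
    (he : e (QuotientGroup.mk 1) = 0) : ∀ x, ∃ g, ofSubgroup H e g 0 = x := by
  intro x
  obtain ⟨g, hg⟩ := QuotientGroup.mk_surjective (e.symm x)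
  refine ⟨g, ?_⟩
  rw [ofSubgroup_apply, ← he, Equiv.symm_apply_apply, MulAction.Quotient.smul_mk,
    smul_eq_mul, mul_one, hg]
  simp

lemma stab_ofSubgroup (H : Subgroup G) {k : ℕ} (e : G ⧸ H ≃ Fin (k+1))
    (he : e (QuotientGroup.mk 1) = 0) (g : G) :
    ofSubgroup H e g 0 = 0 ↔ g ∈ H := by
  rw [ofSubgroup_apply, ← he, Equiv.symm_apply_apply, MulAction.Quotient.smul_mk,
    smul_eq_mul, mul_one, Equiv.apply_eq_iff_eq, eq_comm, QuotientGroup.eq]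
  simp

lemma apply_ofSubgroup (H : Subgroup G) {k : ℕ} (e : G ⧸ H ≃ Fin (k+1))
    (he : e (QuotientGroup.mk 1) = 0) (g : G) :
    e (QuotientGroup.mk g) = ofSubgroup H e g 0 := by
  rw [ofSubgroup_apply]
  congr 1
  have h1 : e.symm 0 = QuotientGroup.mk 1 := by rw [Equiv.symm_apply_eq, he]
  rw [h1, MulAction.Quotient.smul_mk, smul_eq_mul, mul_one]

variable (G) in
/-- The index type for Claim A. -/
abbrev SubData (k : ℕ) : Type _ :=
  Σ H : {H : Subgroup G // IsOpen (H : Set G) ∧ H.index = k + 1},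
    {e : G ⧸ (H.1 : Subgroup G) ≃ Fin (k + 1) // e (QuotientGroup.mk 1) = 0}

lemma finiteQuotient {H : Subgroup G} {k : ℕ} (h : H.index = k + 1) : Finite (G ⧸ H) := by
  have : Nat.card (G ⧸ H) = k + 1 := by rw [← Subgroup.index_eq_card, h]
  exact Nat.finite_of_card_ne_zero (by omega)

variable (G) in
noncomputable def toPT [IsTopologicalGroup G] (k : ℕ) (x : SubData G k) : PT G k :=
  haveI : Finite (G ⧸ (x.1.1 : Subgroup G)) := finiteQuotient x.1.2.2
  ⟨ofSubgroup x.1.1 x.2.1,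
    continuous_ofSubgroup x.1.1 x.1.2.1 x.2.1,
    trans_ofSubgroup x.1.1 x.2.1 x.2.2⟩

lemma toPT_bijective [IsTopologicalGroup G] (k : ℕ) : Function.Bijective (toPT G k) := by
  constructor
  · rintro ⟨⟨H, hH⟩, e, he⟩ ⟨⟨H', hH'⟩, e', he'⟩ hxy
    have hmh : ofSubgroup H e = ofSubgroup H' e' := by
      simpa [toPT, PT, Subtype.ext_iff] using hxy
    have hHH : H = H' := by
      ext g
      rw [← stab_ofSubgroup H e he g, ← stab_ofSubgroup H' e' he' g, hmh]
    subst hHH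
    have hee : e = e' := by
      ext q
      obtain ⟨g, rfl⟩ := QuotientGroup.mk_surjective q
      rw [apply_ofSubgroup H e he g, apply_ofSubgroup H e' he' g, hmh]
    subst hee
    rfl
  · rintro ⟨φ, hcont, htrans⟩
    classical
    set H : Subgroup G :=
      Subgroup.comap φ (MulAction.stabilizer (Equiv.Perm (Fin (k+1))) (0 : Fin (k+1))) with hHdef
    have hmem : ∀ g : G, g ∈ H ↔ φ g 0 = 0 := by
      intro g
      rw [hHdef, Subgroup.mem_comap, MulAction.mem_stabilizer_iff, Equiv.Perm.smul_def]
    have hopen : IsOpen (H : Set G) := by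
      letI : TopologicalSpace (Equiv.Perm (Fin (k+1))) := ⊥
      haveI := discreteTopology_bot (Equiv.Perm (Fin (k+1)))
      have : (H : Set G) = ⇑φ ⁻¹' ((MulAction.stabilizer (Equiv.Perm (Fin (k+1))) (0 : Fin (k+1)) :
          Subgroup (Equiv.Perm (Fin (k+1)))) : Set (Equiv.Perm (Fin (k+1)))) := rfl
      rw [this]
      exact hcont.isOpen_preimage _ (isOpen_discrete _)
    have hwd : ∀ (a b : G), @Setoid.r G (QuotientGroup.leftRel H) a b → φ a 0 = φ b 0 := by
      intro a b hab
      rw [QuotientGroup.leftRel_apply] at hab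
      have : φ b 0 = φ a (φ (a⁻¹ * b) 0) := by
        rw [← Equiv.Perm.mul_apply, ← map_mul, mul_inv_cancel_left]
      rw [this, (hmem _).1 hab]
    set fbar : G ⧸ H → Fin (k+1) := fun q => Quotient.liftOn' q (fun g => φ g 0) hwd
      with hfbar
    have hfbar_mk : ∀ g : G, fbar (QuotientGroup.mk g) = φ g 0 := fun g => rfl
    have hbij : Function.Bijective fbar := by
      constructor
      · intro q q' hqq'
        obtain ⟨a, rfl⟩ := QuotientGroup.mk_surjective q
        obtain ⟨b, rfl⟩ := QuotientGroup.mk_surjective q'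
        rw [hfbar_mk, hfbar_mk] at hqq'
        rw [QuotientGroup.eq]
        rw [hmem, map_mul, map_inv, Equiv.Perm.mul_apply, ← hqq']
        simp
      · intro x
        obtain ⟨g, hg⟩ := htrans x
        exact ⟨QuotientGroup.mk g, hg⟩
    set e : G ⧸ H ≃ Fin (k+1) := Equiv.ofBijective fbar hbij with he
    have he1 : e (QuotientGroup.mk 1) = 0 := by
      rw [he]
      show fbar (QuotientGroup.mk 1) = 0
      rw [hfbar_mk, map_one]
      rfl
    have hidx : H.index = k + 1 := by
      rw [Subgroup.index_eq_card, Nat.card_congr e, Nat.card_eq_fintype_card,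
        Fintype.card_fin]
    refine ⟨⟨⟨H, hopen, hidx⟩, e, he1⟩, ?_⟩
    have : ofSubgroup H e = φ := by
      refine MonoidHom.ext fun g => Equiv.ext fun x => ?_
      rw [ofSubgroup_apply]
      obtain ⟨a, ha⟩ := QuotientGroup.mk_surjective (e.symm x)
      have hx : e (QuotientGroup.mk a) = x := by rw [ha, Equiv.apply_symm_apply]
      rw [← ha, MulAction.Quotient.smul_mk, smul_eq_mul]
      show fbar (QuotientGroup.mk (g * a)) = φ g x
      rw [hfbar_mk, map_mul, Equiv.Perm.mul_apply, ← hfbar_mk a]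
      exact congrArg (φ g) hx
    simp [toPT, PT, Subtype.ext_iff, this]

noncomputable def openSubgroupCount' (G : Type*) [Group G] [TopologicalSpace G] (n : ℕ) : ℕ :=
  Nat.card {H : Subgroup G // IsOpen (H : Set G) ∧ H.index = n}

lemma card_PT [IsTopologicalGroup G] (k : ℕ)
    (hM : Finite {H : Subgroup G // IsOpen (H : Set G) ∧ H.index = k + 1}) :
    Nat.card (PT G k) = k.factorial * openSubgroupCount' G (k + 1) := by
  classical
  letI : Fintype {H : Subgroup G // IsOpen (H : Set G) ∧ H.index = k + 1} :=
    Fintype.ofFinite _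
  haveI hfq : ∀ (H : {H : Subgroup G // IsOpen (H : Set G) ∧ H.index = k + 1}),
      Finite (G ⧸ (H.1 : Subgroup G)) := fun H => finiteQuotient H.2.2
  rw [← Nat.card_congr (Equiv.ofBijective _ (toPT_bijective (G := G) k))]
  rw [show Nat.card (SubData G k) = ∑ H : {H : Subgroup G // IsOpen (H : Set G) ∧
        H.index = k + 1},
      Nat.card {e : G ⧸ (H.1 : Subgroup G) ≃ Fin (k + 1) //
        e (QuotientGroup.mk 1) = 0} from nat_card_sigma _]
  have hcard : ∀ H : {H : Subgroup G // IsOpen (H : Set G) ∧ H.index = k + 1},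
      Nat.card {e : G ⧸ (H.1 : Subgroup G) ≃ Fin (k + 1) //
        e (QuotientGroup.mk 1) = 0} = k.factorial := by
    intro H
    exact card_pointed_equiv (by rw [← Subgroup.index_eq_card, H.2.2]) _
  rw [Finset.sum_congr rfl (fun H _ => hcard H), Finset.sum_const, Finset.card_univ,
    smul_eq_mul, openSubgroupCount', Nat.card_eq_fintype_card, mul_comm]

section ClaimB

variable {n : ℕ}

/-- The orbit finset attached to `S`. -/
def OS (S : Finset (Fin n)) : Finset (Fin (n + 1)) :=
  insert (Fin.last n) (S.image Fin.castSucc)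

lemma last_mem_OS (S : Finset (Fin n)) : Fin.last n ∈ OS S :=
  Finset.mem_insert_self _ _

lemma castSucc_mem_OS (S : Finset (Fin n)) (x : Fin n) :
    Fin.castSucc x ∈ OS S ↔ x ∈ S := by
  simp only [OS, Finset.mem_insert, Finset.mem_image]
  constructor
  · rintro (h | ⟨y, hy, hyx⟩)
    · exact absurd h (Fin.castSucc_lt_last x).ne
    · rwa [← Fin.castSucc_injective n hyx]
  · intro h
    exact Or.inr ⟨x, h, rfl⟩

lemma card_OS (S : Finset (Fin n)) : (OS S).card = S.card + 1 := by
  rw [OS, Finset.card_insert_of_notMem, Finset.card_image_of_injective _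
    (Fin.castSucc_injective n)]
  simp only [Finset.mem_image]
  rintro ⟨y, _, hy⟩
  exact (Fin.castSucc_lt_last y).ne hy

lemma card_notOS (S : Finset (Fin n)) :
    Fintype.card {x : Fin (n + 1) // ¬ x ∈ OS S} = n - S.card := by
  have h1 : S.card ≤ n := by
    simpa using Finset.card_le_univ S
  rw [Fintype.card_subtype_compl]
  rw [show Fintype.card {x : Fin (n+1) // x ∈ OS S} = (OS S).card from Fintype.card_coe _]
  rw [card_OS, Fintype.card_fin]
  omega

noncomputable def eO (S : Finset (Fin n)) : {x : Fin (n + 1) // x ∈ OS S} ≃ Fin (S.card + 1) :=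
  ((OS S).orderIsoOfFin (card_OS S)).toEquiv.symm.trans
    (Equiv.swap (((OS S).orderIsoOfFin (card_OS S)).toEquiv.symm
      ⟨Fin.last n, last_mem_OS S⟩) 0)

lemma eO_last (S : Finset (Fin n)) : eO S ⟨Fin.last n, last_mem_OS S⟩ = 0 := by
  simp [eO]

noncomputable def eC (S : Finset (Fin n)) :
    {x : Fin (n + 1) // ¬ x ∈ OS S} ≃ Fin (n - S.card) :=
  Fintype.equivFinOfCardEq (card_notOS S)

noncomputable def ES (S : Finset (Fin n)) :
    Fin (n + 1) ≃ Fin (S.card + 1) ⊕ Fin (n - S.card) :=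
  (Equiv.sumCompl (fun x => x ∈ OS S)).symm.trans (Equiv.sumCongr (eO S) (eC S))

variable {G : Type*} [Group G] [TopologicalSpace G]

noncomputable def glue (S : Finset (Fin n)) (ψ₁ : G →* Equiv.Perm (Fin (S.card + 1)))
    (ψ₂ : G →* Equiv.Perm (Fin (n - S.card))) : G →* Equiv.Perm (Fin (n + 1)) :=
  (permCongrHom (ES S).symm).toMonoidHom.comp
    ((Equiv.Perm.sumCongrHom _ _).comp (ψ₁.prod ψ₂))

lemma glue_apply (S : Finset (Fin n)) (ψ₁ : G →* Equiv.Perm (Fin (S.card + 1)))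
    (ψ₂ : G →* Equiv.Perm (Fin (n - S.card))) (g : G) (x : Fin (n + 1)) :
    glue S ψ₁ ψ₂ g x = (ES S).symm (Equiv.sumCongr (ψ₁ g) (ψ₂ g) (ES S x)) := rfl

lemma glue_mem (S : Finset (Fin n)) (ψ₁ : G →* Equiv.Perm (Fin (S.card + 1)))
    (ψ₂ : G →* Equiv.Perm (Fin (n - S.card))) (g : G) (x : Fin (n + 1))
    (hx : x ∈ OS S) :
    glue S ψ₁ ψ₂ g x = ((eO S).symm (ψ₁ g (eO S ⟨x, hx⟩)) : {x // x ∈ OS S}) := by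
  rw [glue_apply, ES]
  simp only [Equiv.trans_apply, Equiv.symm_trans_apply, Equiv.symm_symm]
  rw [Equiv.sumCompl_symm_apply_of_pos hx]
  simp

lemma glue_not_mem (S : Finset (Fin n)) (ψ₁ : G →* Equiv.Perm (Fin (S.card + 1)))
    (ψ₂ : G →* Equiv.Perm (Fin (n - S.card))) (g : G) (x : Fin (n + 1))
    (hx : ¬ x ∈ OS S) :
    glue S ψ₁ ψ₂ g x = ((eC S).symm (ψ₂ g (eC S ⟨x, hx⟩)) : {x // ¬ x ∈ OS S}) := by
  rw [glue_apply, ES]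
  simp only [Equiv.trans_apply, Equiv.symm_trans_apply, Equiv.symm_symm]
  rw [Equiv.sumCompl_symm_apply_of_neg hx]
  simp

lemma glue_mem_iff (S : Finset (Fin n)) (ψ₁ : G →* Equiv.Perm (Fin (S.card + 1)))
    (ψ₂ : G →* Equiv.Perm (Fin (n - S.card))) (g : G) (x : Fin (n + 1)) :
    glue S ψ₁ ψ₂ g x ∈ OS S ↔ x ∈ OS S := by
  by_cases hx : x ∈ OS S
  · rw [glue_mem S ψ₁ ψ₂ g x hx]
    simpa using hx
  · rw [glue_not_mem S ψ₁ ψ₂ g x hx]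
    have h2 : ¬ (((eC S).symm (ψ₂ g (eC S ⟨x, hx⟩)) : {x // ¬ x ∈ OS S}) : Fin (n+1)) ∈ OS S :=
      ((eC S).symm _).2
    simp [h2, hx]

lemma glue_orbit (S : Finset (Fin n)) (ψ₁ : G →* Equiv.Perm (Fin (S.card + 1)))
    (ψ₂ : G →* Equiv.Perm (Fin (n - S.card)))
    (hψ₁ : ∀ y, ∃ g, ψ₁ g 0 = y) (x : Fin (n + 1)) :
    (∃ g, glue S ψ₁ ψ₂ g (Fin.last n) = x) ↔ x ∈ OS S := by
  constructor
  · rintro ⟨g, rfl⟩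
    rw [glue_mem S ψ₁ ψ₂ g _ (last_mem_OS S)]
    exact Subtype.mem _
  · intro hx
    obtain ⟨g, hg⟩ := hψ₁ (eO S ⟨x, hx⟩)
    refine ⟨g, ?_⟩
    rw [glue_mem S ψ₁ ψ₂ g _ (last_mem_OS S), eO_last, hg, Equiv.symm_apply_apply]

lemma glue_continuous (S : Finset (Fin n)) {ψ₁ : G →* Equiv.Perm (Fin (S.card + 1))}
    {ψ₂ : G →* Equiv.Perm (Fin (n - S.card))}
    (h₁ : @Continuous G _ _ ⊥ ⇑ψ₁) (h₂ : @Continuous G _ _ ⊥ ⇑ψ₂) :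
    @Continuous G (Equiv.Perm (Fin (n + 1))) _ ⊥ ⇑(glue S ψ₁ ψ₂) := by
  letI : TopologicalSpace (Equiv.Perm (Fin (S.card + 1))) := ⊥
  letI : TopologicalSpace (Equiv.Perm (Fin (n - S.card))) := ⊥
  letI : TopologicalSpace (Equiv.Perm (Fin (n + 1))) := ⊥
  haveI := discreteTopology_bot (Equiv.Perm (Fin (S.card + 1)))
  haveI := discreteTopology_bot (Equiv.Perm (Fin (n - S.card)))
  have key : ⇑(glue S ψ₁ ψ₂)
      = (fun p : Equiv.Perm (Fin (S.card + 1)) × Equiv.Perm (Fin (n - S.card)) =>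
          (permCongrHom (ES S).symm) ((Equiv.Perm.sumCongrHom _ _) p))
        ∘ (fun g => (ψ₁ g, ψ₂ g)) := rfl
  rw [key]
  exact (continuous_of_discreteTopology).comp (h₁.prodMk h₂)

end ClaimB

section ClaimB2

variable {G : Type*} [Group G] [TopologicalSpace G]

def restrictHom {α : Type*} (p : α → Prop) (φ : G →* Equiv.Perm α)
    (h : ∀ g x, p x ↔ p (φ g x)) : G →* Equiv.Perm {x // p x} where
  toFun g := (φ g).subtypePerm (fun x => (h g x).symm)
  map_one' := by
    ext y
    simp [Equiv.Perm.subtypePerm_apply]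
  map_mul' g₁ g₂ := by
    ext y
    simp [Equiv.Perm.subtypePerm_apply]
    rfl

variable (G) in
noncomputable def glueT (n : ℕ) :
    (Σ S : Finset (Fin n), PT G S.card × T G (n - S.card)) → T G (n + 1) :=
  fun x => ⟨glue x.1 x.2.1.1 x.2.2.1, glue_continuous x.1 x.2.1.2.1 x.2.2.2⟩

lemma glueT_bijective (n : ℕ) : Function.Bijective (glueT G n) := by
  constructor
  · rintro ⟨S, ⟨ψ₁, hc₁, ht₁⟩, ⟨ψ₂, hc₂⟩⟩ ⟨S', ⟨ψ₁', hc₁', ht₁'⟩, ⟨ψ₂', hc₂'⟩⟩ h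
    have hφ : glue S ψ₁ ψ₂ = glue S' ψ₁' ψ₂' := congrArg Subtype.val h
    have hSS : S = S' := by
      ext x
      rw [← castSucc_mem_OS S x, ← castSucc_mem_OS S' x,
        ← glue_orbit S ψ₁ ψ₂ ht₁ _, ← glue_orbit S' ψ₁' ψ₂' ht₁' _, hφ]
    subst hSS
    have hψ₁ : ψ₁ = ψ₁' := by
      refine MonoidHom.ext fun g => Equiv.ext fun y => ?_
      have h1 := glue_mem S ψ₁ ψ₂ g ((eO S).symm y) ((eO S).symm y).2
      have h2 := glue_mem S ψ₁' ψ₂' g ((eO S).symm y) ((eO S).symm y).2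
      simp only [Subtype.coe_eta, Equiv.apply_symm_apply] at h1 h2
      rw [hφ] at h1
      exact (eO S).symm.injective (Subtype.coe_injective (h1.symm.trans h2))
    subst hψ₁
    have hψ₂ : ψ₂ = ψ₂' := by
      refine MonoidHom.ext fun g => Equiv.ext fun y => ?_
      have h1 := glue_not_mem S ψ₁ ψ₂ g ((eC S).symm y) ((eC S).symm y).2
      have h2 := glue_not_mem S ψ₁ ψ₂' g ((eC S).symm y) ((eC S).symm y).2
      simp only [Subtype.coe_eta, Equiv.apply_symm_apply] at h1 h2
      rw [hφ] at h1
      exact (eC S).symm.injective (Subtype.coe_injective (h1.symm.trans h2))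
    subst hψ₂
    rfl
  · rintro ⟨φ, hφ⟩
    classical
    set S : Finset (Fin n) :=
      Finset.univ.filter (fun x => ∃ g : G, φ g (Fin.last n) = Fin.castSucc x) with hSdef
    have hOS : ∀ x : Fin (n+1), x ∈ OS S ↔ ∃ g, φ g (Fin.last n) = x := by
      intro x
      by_cases hx : x = Fin.last n
      · subst hx
        simp only [last_mem_OS S, true_iff]
        exact ⟨1, by simp⟩
      · obtain ⟨y, rfl⟩ := Fin.exists_castSucc_eq.mpr hx
        rw [castSucc_mem_OS, hSdef]
        simp [Finset.mem_filter]
    have horb : ∀ (g : G) (x : Fin (n+1)),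
        (∃ h, φ h (Fin.last n) = x) ↔ (∃ h, φ h (Fin.last n) = φ g x) := by
      intro g x
      constructor
      · rintro ⟨h, rfl⟩
        exact ⟨g * h, by rw [map_mul]; rfl⟩
      · rintro ⟨h, hh⟩
        refine ⟨g⁻¹ * h, ?_⟩
        rw [map_mul, Equiv.Perm.mul_apply, hh, map_inv]
        exact (φ g).symm_apply_apply _
    have hinv : ∀ (g : G) (x : Fin (n+1)), x ∈ OS S ↔ φ g x ∈ OS S := by
      intro g x
      rw [hOS, hOS]
      exact horb g x
    have hinv' : ∀ (g : G) (x : Fin (n+1)), (¬ x ∈ OS S) ↔ ¬ (φ g x ∈ OS S) :=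
      fun g x => not_congr (hinv g x)
    set ψ₁ : G →* Equiv.Perm (Fin (S.card + 1)) :=
      (permCongrHom (eO S)).toMonoidHom.comp (restrictHom _ φ hinv) with hψ₁def
    set ψ₂ : G →* Equiv.Perm (Fin (n - S.card)) :=
      (permCongrHom (eC S)).toMonoidHom.comp (restrictHom _ φ hinv') with hψ₂def
    have hψ₁_apply : ∀ (g : G) (y : Fin (S.card + 1)),
        ψ₁ g y = eO S ⟨φ g ((eO S).symm y), (hinv g _).1 ((eO S).symm y).2⟩ :=
      fun g y => rfl
    have hψ₂_apply : ∀ (g : G) (y : Fin (n - S.card)),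
        ψ₂ g y = eC S ⟨φ g ((eC S).symm y), (hinv' g _).1 ((eC S).symm y).2⟩ :=
      fun g y => rfl
    have hcψ₁ : @Continuous G _ _ ⊥ ⇑ψ₁ := by
      letI : TopologicalSpace (Equiv.Perm (Fin (n+1))) := ⊥
      letI : TopologicalSpace (Equiv.Perm (Fin (S.card+1))) := ⊥
      haveI := discreteTopology_bot (Equiv.Perm (Fin (n+1)))
      have key : ⇑ψ₁ = (fun σ : Equiv.Perm (Fin (n+1)) =>
          if h : ∀ x, x ∈ OS S ↔ σ x ∈ OS S then (eO S).permCongr (σ.subtypePerm (fun x => (h x).symm))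
          else 1) ∘ ⇑φ := by
        funext g
        simp only [Function.comp_apply]
        rw [dif_pos (hinv g)]
        rfl
      rw [key]
      exact continuous_of_discreteTopology.comp hφ
    have hcψ₂ : @Continuous G _ _ ⊥ ⇑ψ₂ := by
      letI : TopologicalSpace (Equiv.Perm (Fin (n+1))) := ⊥
      letI : TopologicalSpace (Equiv.Perm (Fin (n - S.card))) := ⊥
      haveI := discreteTopology_bot (Equiv.Perm (Fin (n+1)))
      have key : ⇑ψ₂ = (fun σ : Equiv.Perm (Fin (n+1)) =>
          if h : ∀ x, (¬ x ∈ OS S) ↔ ¬ σ x ∈ OS S then (eC S).permCongr (σ.subtypePerm (fun x => (h x).symm))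
          else 1) ∘ ⇑φ := by
        funext g
        simp only [Function.comp_apply]
        rw [dif_pos (hinv' g)]
        rfl
      rw [key]
      exact continuous_of_discreteTopology.comp hφ
    have htψ₁ : ∀ y, ∃ g, ψ₁ g 0 = y := by
      intro y
      obtain ⟨g, hg⟩ := (hOS _).1 ((eO S).symm y).2
      refine ⟨g, ?_⟩
      have h0 : ((eO S).symm 0 : {x // x ∈ OS S}) = ⟨Fin.last n, last_mem_OS S⟩ := by
        rw [Equiv.symm_apply_eq, eO_last]
      rw [hψ₁_apply]
      simp only [h0, hg, Subtype.coe_eta, Equiv.apply_symm_apply]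
    refine ⟨⟨S, ⟨⟨ψ₁, hcψ₁, htψ₁⟩, ⟨ψ₂, hcψ₂⟩⟩⟩, ?_⟩
    refine Subtype.ext ?_
    show glue S ψ₁ ψ₂ = φ
    refine MonoidHom.ext fun g => Equiv.ext fun x => ?_
    by_cases hx : x ∈ OS S
    · rw [glue_mem S ψ₁ ψ₂ g x hx, hψ₁_apply]
      simp only [Equiv.symm_apply_apply, Subtype.coe_eta]
    · rw [glue_not_mem S ψ₁ ψ₂ g x hx, hψ₂_apply]
      simp only [Equiv.symm_apply_apply, Subtype.coe_eta]

lemma card_T_succ [IsTopologicalGroup G] (hT : ∀ m, Finite (T G m)) (n : ℕ) :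
    Nat.card (T G (n + 1)) =
      ∑ k ∈ Finset.range (n + 1),
        n.choose k * Nat.card (PT G k) * Nat.card (T G (n - k)) := by
  classical
  haveI : ∀ S : Finset (Fin n), Finite (PT G S.card × T G (n - S.card)) := by
    intro S
    haveI := hT (S.card + 1)
    haveI : Finite (PT G S.card) := finitePT _
    haveI := hT (n - S.card)
    infer_instance
  have h1 : Nat.card (T G (n+1))
      = Nat.card (Σ S : Finset (Fin n), PT G S.card × T G (n - S.card)) :=
    (Nat.card_congr (Equiv.ofBijective _ (glueT_bijective (G := G) n))).symm
  rw [h1, nat_card_sigma]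
  simp_rw [Nat.card_prod]
  rw [show (Finset.univ : Finset (Finset (Fin n)))
      = (Finset.univ : Finset (Fin n)).powerset from Finset.powerset_univ.symm]
  rw [Finset.sum_powerset_apply_card (fun m => Nat.card (PT G m) * Nat.card (T G (n - m)))]
  simp only [Finset.card_univ, Fintype.card_fin, smul_eq_mul]
  exact Finset.sum_congr rfl fun k _ => by ring

end ClaimB2

end BellAux

/-- With `b_0 = 1` and
`b_{n+1} = ∑_{k=0}^{n} C(n,k) · b_{n-k} · (k! · M_{k+1})` (i.e. `b_n` is the complete
Bell polynomial `B_n(0!·M_1, …, (n-1)!·M_n)`), one has `t_n = b_n` for all `n ≥ 0`,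
where `t_n` is the number of continuous homomorphisms `G → S_n` (with `t_0 = 1`) and
`M_k` the number of open subgroups of `G` of index `k`. -/
theorem contHomCount_eq_bell (G : Type*) [Group G] [TopologicalSpace G]
    [IsTopologicalGroup G]
    (hfin_t : ∀ n : ℕ,
      Finite {φ : G →* Equiv.Perm (Fin n) // @Continuous G (Equiv.Perm (Fin n)) _ ⊥ ⇑φ})
    (hfin_M : ∀ n : ℕ, 0 < n → Finite {H : Subgroup G // IsOpen (H : Set G) ∧ H.index = n})
    (b : ℕ → ℕ) (hb0 : b 0 = 1)
    (hb : ∀ n : ℕ, b (n + 1) =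
      ∑ k ∈ Finset.range (n + 1),
        n.choose k * b (n - k) * (k.factorial * openSubgroupCount G (k + 1))) :
    ∀ n : ℕ, contHomCount G n = b n := by
  have hT : ∀ m, Finite (BellAux.T G m) := hfin_t
  have hcontT : ∀ m, contHomCount G m = Nat.card (BellAux.T G m) := fun m => rfl
  intro n
  induction n using Nat.strong_induction_on with
  | _ n ih =>
    cases n with
    | zero =>
      rw [hb0]
      haveI hs0 : Subsingleton (Equiv.Perm (Fin 0)) := ⟨fun a b => Equiv.ext fun x => x.elim0⟩
      haveI hs : Subsingleton (BellAux.T G 0) :=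
        ⟨fun a b => Subtype.ext (MonoidHom.ext fun g => Subsingleton.elim _ _)⟩
      haveI hne : Nonempty (BellAux.T G 0) := ⟨⟨1, by
        letI : TopologicalSpace (Equiv.Perm (Fin 0)) := ⊥
        show Continuous (fun _ : G => (1 : Equiv.Perm (Fin 0)))
        exact continuous_const⟩⟩
      show Nat.card (BellAux.T G 0) = 1
      exact Nat.card_eq_one_iff_unique.mpr ⟨hs, hne⟩
    | succ m =>
      rw [hb]
      have hM : ∀ k : ℕ, Finite {H : Subgroup G // IsOpen (H : Set G) ∧ H.index = k + 1} :=
        fun k => hfin_M (k + 1) (Nat.succ_pos k)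
      have hstep := BellAux.card_T_succ (G := G) hT m
      show Nat.card (BellAux.T G (m + 1)) = _
      rw [hstep]
      refine Finset.sum_congr rfl fun k hk => ?_
      rw [BellAux.card_PT k (hM k)]
      have hIH : Nat.card (BellAux.T G (m - k)) = b (m - k) := by
        have h := ih (m - k) (by omega)
        rwa [hcontT] at h
      rw [hIH]
      have hMM : BellAux.openSubgroupCount' G (k + 1) = openSubgroupCount G (k + 1) := rfl
      rw [hMM]
      ring
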